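/- Let 0 < ε < 1, let r ≥ 1 be a positive integer, let w > 0, and let q_1, …, q_ℓ be nonnegative reals such that q_k ≤ (ε/(2r))·w for every k, Σ_{k=1}^{ℓ} q_k ≥ w/r, and Σ_{k=1}^{ℓ} q_k ≤ w. Then there exist an integer h with 1/ε − 1 ≤ h < 2r/ε and a partition of {1, …, ℓ} into h sets V_1, …, V_h (consecutive intervals) such that Σ_{k∈V_s} q_k ≥ (ε/(2r))·w for every s ∈ {1, …, h}. -/

import Mathlib

/-- Combinatorial core of the packing lemma: nonnegative reals `q 0, …, q (l-1)`, each at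
most `(ε/(2r))·w`, with total sum in `[w/r, w]`, can be partitioned into `h` consecutive
intervals, `1/ε - 1 ≤ h < 2r/ε`, each of total at least `(ε/(2r))·w`. -/
theorem batch_partition (ε : ℝ) (hε0 : 0 < ε) (hε1 : ε < 1)
    (r : ℕ) (hr : 1 ≤ r) (w : ℝ) (hw : 0 < w)
    (l : ℕ) (q : ℕ → ℝ)
    (hqnn : ∀ k < l, 0 ≤ q k)
    (hqub : ∀ k < l, q k ≤ ε/(2*r) * w)
    (hlb : w/r ≤ ∑ k ∈ Finset.range l, q k)
    (hub : ∑ k ∈ Finset.range l, q k ≤ w) :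
    ∃ h : ℕ, 1/ε - 1 ≤ (h : ℝ) ∧ (h : ℝ) < 2*r/ε ∧
      ∃ c : ℕ → ℕ, c 0 = 0 ∧ c h = l ∧ (∀ s < h, c s < c (s+1)) ∧
        ∀ s < h, ε/(2*r) * w ≤ ∑ k ∈ Finset.Ico (c s) (c (s+1)), q k := by
  classical
  set δ : ℝ := ε/(2*r) * w with hδdef
  set S : ℝ := ∑ k ∈ Finset.range l, q k with hSdef
  have hr' : (1:ℝ) ≤ (r:ℝ) := by exact_mod_cast hr
  have hrpos : (0:ℝ) < (r:ℝ) := by linarith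
  have hδpos : 0 < δ := by
    have : 0 < ε/(2*r) := div_pos hε0 (by positivity)
    exact mul_pos this hw
  have hSpos : 0 < S := lt_of_lt_of_le (by positivity) hlb
  have h2δ : 2*δ = ε*w/r := by
    field_simp [hδdef]
    rw [hδdef]; field_simp
  -- the number of batches
  set h : ℕ := ⌊S/(2*δ)⌋₊ with hhdef
  have hratio1 : 1/ε ≤ S/(2*δ) := by
    rw [h2δ, div_le_div_iff₀ hε0 (by positivity)]
    have : w ≤ S * r := by
      have := hlb
      rw [div_le_iff₀ hrpos] at this
      exact this
    calc 1 * (ε*w/r) = ε * (w/r) := by ring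
      _ ≤ ε * S := by
          apply mul_le_mul_of_nonneg_left _ (le_of_lt hε0)
          rw [div_le_iff₀ hrpos]; exact this
      _ = S * ε := by ring
  have hone_lt : (1:ℝ) < 1/ε := by
    rw [lt_div_iff₀ hε0]; linarith
  have hhpos : 1 ≤ h := by
    rw [hhdef]
    apply Nat.le_floor
    push_cast
    linarith
  have hh0 : 0 < h := hhpos
  have hhR : (0:ℝ) < (h:ℝ) := by exact_mod_cast hh0
  have hfloor_le : (h:ℝ) ≤ S/(2*δ) := Nat.floor_le (by positivity)
  have hfloor_gt : S/(2*δ) < (h:ℝ) + 1 := Nat.lt_floor_add_one _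
  -- bounds on h
  have hlow : 1/ε - 1 ≤ (h:ℝ) := by linarith
  have hupperh : (h:ℝ) < 2*r/ε := by
    have h1 : S/(2*δ) ≤ w/(2*δ) := by
      apply div_le_div_of_nonneg_right hub (by positivity)
    have h2 : w/(2*δ) = r/ε := by
      rw [h2δ]; field_simp
    have h3 : (0:ℝ) < (r:ℝ)/ε := by positivity
    have h4 : 2*(r:ℝ)/ε = (r:ℝ)/ε + (r:ℝ)/ε := by ring
    linarith
  -- gap between thresholds
  have hgap : 2*δ ≤ S/(h:ℝ) := by
    rw [le_div_iff₀ hhR]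
    have := hfloor_le
    rw [le_div_iff₀ (by positivity : (0:ℝ) < 2*δ)] at this
    linarith [this]
  -- partial sums
  set P : ℕ → ℝ := fun n => ∑ k ∈ Finset.range n, q k with hPdef
  have hPl : P l = S := rfl
  -- thresholds
  set t : ℕ → ℝ := fun s => (s:ℝ) * (S/(h:ℝ)) with htdef
  have htS : ∀ s ≤ h, t s ≤ S := by
    intro s hs
    have : (s:ℝ) ≤ (h:ℝ) := by exact_mod_cast hs
    calc t s = (s:ℝ) * (S/(h:ℝ)) := rfl
      _ ≤ (h:ℝ) * (S/(h:ℝ)) := by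
          apply mul_le_mul_of_nonneg_right this (by positivity)
      _ = S := by field_simp
  have hex : ∀ s : ℕ, s ≤ h → ∃ n, t s ≤ P n := fun s hs => ⟨l, by rw [hPl]; exact htS s hs⟩
  set c : ℕ → ℕ := fun s => if hs : s < h then Nat.find (hex s hs.le) else l with hcdef
  have hcspec : ∀ s (hs : s < h), t s ≤ P (c s) := by
    intro s hs
    simp only [hcdef, dif_pos hs]
    exact Nat.find_spec (hex s hs.le)
  have hcmin : ∀ s (hs : s < h) m, m < c s → P m < t s := by
    intro s hs m hm
    simp only [hcdef, dif_pos hs] at hm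
    have := Nat.find_min (hex s hs.le) hm
    linarith [not_le.mp this]
  have hcle : ∀ s, c s ≤ l := by
    intro s
    by_cases hs : s < h
    · simp only [hcdef, dif_pos hs]
      exact Nat.find_le (by rw [hPl]; exact htS s hs.le)
    · simp [hcdef, dif_neg hs]
  have hclow : ∀ s ≤ h, t s ≤ P (c s) := by
    intro s hs
    rcases lt_or_eq_of_le hs with hs' | hs'
    · exact hcspec s hs'
    · subst hs'
      simp only [hcdef, dif_neg (lt_irrefl h)]
      rw [hPl]
      have : t h = S := by
        simp only [htdef]
        field_simp
      linarith [this]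
  have hcupper : ∀ s (hs : s < h), P (c s) ≤ t s + δ := by
    intro s hs
    rcases Nat.eq_zero_or_pos (c s) with h0 | h0
    · rw [h0]
      have : P 0 = 0 := by simp [hPdef]
      have ht0 : 0 ≤ t s := by positivity
      linarith
    · obtain ⟨m, hm⟩ : ∃ m, c s = m + 1 := ⟨c s - 1, by omega⟩
      have hml : m < l := by have := hcle s; omega
      have hPm : P m < t s := hcmin s hs m (by omega)
      have hq : q m ≤ δ := hqub m hml
      have : P (m+1) = P m + q m := by
        simp [hPdef, Finset.sum_range_succ]
      rw [hm, this]
      linarith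
  have hcmono : ∀ s (hs : s < h), c s ≤ c (s+1) := by
    intro s hs
    by_contra hcon
    push_neg at hcon
    have h1 : P (c (s+1)) < t s := hcmin s hs _ hcon
    have h2 : t (s+1) ≤ P (c (s+1)) := hclow (s+1) (by omega)
    have h3 : t s ≤ t (s+1) := by
      simp only [htdef]
      apply mul_le_mul_of_nonneg_right _ (by positivity)
      push_cast; linarith
    linarith
  have hbatch : ∀ s (hs : s < h), δ ≤ ∑ k ∈ Finset.Ico (c s) (c (s+1)), q k := by
    intro s hs
    have hsum : ∑ k ∈ Finset.Ico (c s) (c (s+1)), q k = P (c (s+1)) - P (c s) := by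
      rw [Finset.sum_Ico_eq_sub _ (hcmono s hs)]
    rw [hsum]
    have h1 := hcupper s hs
    have h2 := hclow (s+1) (by omega)
    have h3 : t (s+1) - t s = S/(h:ℝ) := by
      simp only [htdef]
      push_cast; ring
    linarith
  refine ⟨h, hlow, hupperh, c, ?_, ?_, ?_, ?_⟩
  · -- c 0 = 0
    simp only [hcdef, dif_pos hh0]
    rw [Nat.find_eq_zero]
    simp [htdef, hPdef]
  · simp [hcdef]
  · intro s hs
    have := hbatch s hs
    by_contra hcon
    push_neg at hcon
    have heq : c s = c (s+1) := le_antisymm (hcmono s hs) hcon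
    rw [heq] at this
    simp at this
    linarith
  · exact hbatch
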